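/- For all integers 1 ≤ j ≤ r, let P ∈ ℤ[q] be the polynomial determined by [2r−j]_q · P(q) = [j]_q · [2r−j choose r]_{q²} (such P exists). Then the polynomial P(−q), obtained by substituting q ↦ −q, has only nonnegative coefficients. (Equivalently, T_r^{(j)}(2r−j, −q) = q^{r²−r}·P(−q) is a positive polynomial for j ≤ r.) -/

import Mathlib

open Polynomial

/-- The q-integer `[n]_q = 1 + q + ⋯ + q^{n−1}` as a polynomial in `ℤ[q]`
(with `[0]_q = 0`). -/
noncomputable def qIntP (n : ℕ) : Polynomial ℤ := ∑ i ∈ Finset.range n, Polynomial.X ^ i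

/-- The q-factorial `[n]_q! = [1]_q[2]_q⋯[n]_q` in `ℤ[q]`. -/
noncomputable def qFactP (n : ℕ) : Polynomial ℤ := ∏ i ∈ Finset.range n, qIntP (i + 1)

/-- The Gaussian binomial coefficient `[m choose k]_q = [m]_q!/([k]_q![m−k]_q!)`
as a polynomial in `ℤ[q]` (the division, by a monic polynomial, is exact),
and `0` if `k > m`. -/
noncomputable def qBinomP (m k : ℕ) : Polynomial ℤ :=
  if k ≤ m then qFactP m /ₘ (qFactP k * qFactP (m - k)) else 0

/-- The Gaussian binomial coefficient `[m choose k]_{q²}`, i.e. `[m choose k]_q`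
with `q` replaced by `q²`. -/
noncomputable def qBinomP2 (m k : ℕ) : Polynomial ℤ := (qBinomP m k).comp (Polynomial.X ^ 2)



/-! ### infrastructure -/

lemma qIntP_zero : qIntP 0 = 0 := by simp [qIntP]

lemma qIntP_one : qIntP 1 = 1 := by simp [qIntP]

lemma qIntP_add (a b : ℕ) : qIntP (a + b) = qIntP a + X ^ a * qIntP b := by
  induction b with
  | zero => simp [qIntP_zero]
  | succ b ih =>
      have : a + (b + 1) = (a + b) + 1 := by omega
      rw [this]
      simp only [qIntP, Finset.sum_range_succ] at *
      rw [ih]; ring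

lemma qIntP_monic {n : ℕ} (hn : n ≠ 0) : (qIntP n).Monic := monic_geom_sum_X hn

lemma qIntP_ne_zero {n : ℕ} (hn : n ≠ 0) : qIntP n ≠ 0 := (qIntP_monic hn).ne_zero

lemma qFactP_zero : qFactP 0 = 1 := by simp [qFactP]

lemma qFactP_succ (n : ℕ) : qFactP (n + 1) = qFactP n * qIntP (n + 1) :=
  Finset.prod_range_succ _ _

lemma qFactP_monic (n : ℕ) : (qFactP n).Monic :=
  monic_prod_of_monic _ _ (fun i _ => qIntP_monic (Nat.succ_ne_zero i))

lemma qFactP_ne_zero (n : ℕ) : qFactP n ≠ 0 := (qFactP_monic n).ne_zero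

/-- `(X^a - 1) [b] = (X^b - 1) [a]` -/
lemma qIntP_comm (a b : ℕ) : (X ^ a - 1) * qIntP b = (X ^ b - 1) * qIntP a := by
  have ha : qIntP a * (X - 1) = X ^ a - 1 := geom_sum_mul X a
  have hb : qIntP b * (X - 1) = X ^ b - 1 := geom_sum_mul X b
  linear_combination qIntP a * hb - qIntP b * ha

lemma X_pow_sub_one_ne_zero {n : ℕ} (hn : n ≠ 0) : (X ^ n - 1 : Polynomial ℤ) ≠ 0 := by
  intro h
  have := congrArg (fun p => Polynomial.coeff p 0) h
  simp [coeff_X_pow, Ne.symm hn] at this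

/-! ### Gaussian binomials by Pascal recursion -/

noncomputable def gauss : ℕ → ℕ → Polynomial ℤ
  | _, 0 => 1
  | 0, _ + 1 => 0
  | m + 1, k + 1 => gauss m k + X ^ (k + 1) * gauss m (k + 1)

@[simp] lemma gauss_zero_right (m : ℕ) : gauss m 0 = 1 := by cases m <;> rfl

lemma gauss_succ_succ (m k : ℕ) :
    gauss (m + 1) (k + 1) = gauss m k + X ^ (k + 1) * gauss m (k + 1) := rfl

lemma gauss_eq_zero : ∀ {m k : ℕ}, m < k → gauss m k = 0 := by
  intro m
  induction m with
  | zero => intro k hk; match k, hk with | k+1, _ => rfl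
  | succ m ih =>
      intro k hk
      match k, hk with
      | k+1, hk =>
        rw [gauss_succ_succ, ih (by omega), ih (by omega)]
        simp

lemma gauss_self : ∀ m : ℕ, gauss m m = 1 := by
  intro m
  induction m with
  | zero => rfl
  | succ m ih => rw [gauss_succ_succ, ih, gauss_eq_zero (by omega)]; simp

lemma gauss_mul_fact : ∀ {m k : ℕ}, k ≤ m →
    gauss m k * (qFactP k * qFactP (m - k)) = qFactP m := by
  intro m
  induction m with
  | zero => intro k hk; interval_cases k; simp [qFactP_zero]
  | succ m ih =>
      intro k hk
      cases k with
      | zero => simp [qFactP_zero]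
      | succ k =>
        rcases Nat.lt_or_ge k m with hkm | hkm
        · -- k + 1 ≤ m
          have h1 : k ≤ m := le_of_lt hkm
          have h2 : k + 1 ≤ m := hkm
          have e1 : m + 1 - (k + 1) = (m - (k+1)) + 1 := by omega
          have e2 : m - k = (m - (k+1)) + 1 := by omega
          have ihA := ih h1
          have ihB := ih h2
          rw [e2, qFactP_succ (m - (k+1))] at ihA
          rw [qFactP_succ k] at ihB
          have hsum : qIntP (m + 1) = qIntP (k + 1) + X ^ (k+1) * qIntP (m - k) := by
            have := qIntP_add (k+1) (m - k)
            rw [show (k+1) + (m-k) = m + 1 by omega] at this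
            exact this
          rw [gauss_succ_succ, e1, qFactP_succ (m - (k+1)), qFactP_succ m,
            qFactP_succ k, hsum, e2]
          linear_combination qIntP (k+1) * ihA + X ^ (k+1) * qIntP (m - (k+1) + 1) * ihB
        · -- k = m
          have : k = m := by omega
          subst this
          rw [gauss_succ_succ, gauss_self, gauss_eq_zero (by omega)]
          simp [qFactP_zero]

lemma qBinomP_eq_gauss {m k : ℕ} (h : k ≤ m) : qBinomP m k = gauss m k := by
  rw [qBinomP, if_pos h, ← gauss_mul_fact h, mul_comm]
  exact mul_divByMonic_cancel_left _ ((qFactP_monic k).mul (qFactP_monic (m-k)))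

lemma gauss_symm {m k : ℕ} (h : k ≤ m) : gauss m k = gauss m (m - k) := by
  have h2 : m - k ≤ m := by omega
  have e := (gauss_mul_fact h).trans (gauss_mul_fact h2).symm
  rw [show m - (m - k) = k by omega] at e
  have hmono : (qFactP k * qFactP (m-k)).Monic := (qFactP_monic k).mul (qFactP_monic (m-k))
  apply mul_right_cancel₀ hmono.ne_zero
  rw [e]; ring

/-! ### absorption identities -/

lemma A2 (m r : ℕ) :
    (X ^ (m + 1) - 1) * gauss m r = (X ^ (r + 1) - 1) * gauss (m + 1) (r + 1) := by
  rcases Nat.lt_or_ge m r with h | h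
  · rw [gauss_eq_zero h, gauss_eq_zero (by omega)]; simp
  have h1 := gauss_mul_fact h
  have h2 := gauss_mul_fact (show r + 1 ≤ m + 1 by omega)
  rw [show m + 1 - (r + 1) = m - r from by omega, qFactP_succ r, qFactP_succ m] at h2
  have hc := qIntP_comm (m + 1) (r + 1)
  apply mul_right_cancel₀ (((qFactP_monic r).mul ((qIntP_monic (Nat.succ_ne_zero r)).mul
    (qFactP_monic (m - r)))).ne_zero)
  linear_combination (X ^ (m+1) - 1) * qIntP (r+1) * h1 - (X ^ (r+1) - 1) * h2 +
    qFactP m * hc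

lemma B2 (m r : ℕ) :
    (X ^ (m + 1) - 1) * gauss m r = (X ^ (m + 1 - r) - 1) * gauss (m + 1) r := by
  rcases Nat.lt_or_ge m r with hm | hm
  · rcases Nat.lt_or_ge (m+1) r with hm2 | hm2
    · rw [gauss_eq_zero hm, gauss_eq_zero hm2]; simp
    · have : r = m + 1 := by omega
      subst this
      rw [gauss_eq_zero (by omega), Nat.sub_self]
      simp
  · have h1 := gauss_mul_fact hm
    have h2 := gauss_mul_fact (show r ≤ m + 1 by omega)
    rw [show m + 1 - r = (m - r) + 1 from by omega, qFactP_succ (m - r), qFactP_succ m] at h2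
    have hc := qIntP_comm (m + 1) (m - r + 1)
    rw [show m + 1 - r = (m - r) + 1 from by omega]
    apply mul_right_cancel₀ (((qFactP_monic r).mul ((qFactP_monic (m - r)).mul
      (qIntP_monic (Nat.succ_ne_zero (m - r))))).ne_zero)
    linear_combination (X ^ (m+1) - 1) * qIntP (m - r + 1) * h1 - (X ^ (m - r + 1) - 1) * h2 +
      qFactP m * hc

/-! ### the key identity: `[m] * P₀ = [j] * [m choose r]_{q²}` with `m = 2r - j` -/

lemma key (i s : ℕ) :
    qIntP (i + 2*s + 1) * ((gauss (i + 2*s) (i + s)).comp (X ^ 2)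
        - X ^ (i + 1) * (gauss (i + 2*s) (i + s + 1)).comp (X ^ 2))
      = qIntP (i + 1) * (gauss (i + 2*s + 1) (i + s + 1)).comp (X ^ 2) := by
  have hA0 := A2 (i + 2*s) (i + s)
  have hB0 := B2 (i + 2*s) (i + s + 1)
  rw [show i + 2*s + 1 - (i + s + 1) = s from by omega] at hB0
  have hA := congrArg (fun p => p.comp ((X : Polynomial ℤ) ^ 2)) hA0
  have hB := congrArg (fun p => p.comp ((X : Polynomial ℤ) ^ 2)) hB0
  simp only [mul_comp, sub_comp, one_comp, X_pow_comp, ← pow_mul] at hA hB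
  have hC := qIntP_comm (i + 2*s + 1) (i + 1)
  have h0 : (X ^ (2*(i + 2*s + 1)) - 1 : Polynomial ℤ) ≠ 0 := X_pow_sub_one_ne_zero (by omega)
  apply mul_left_cancel₀ h0
  linear_combination qIntP (i+2*s+1) * hA - qIntP (i+2*s+1) * X^(i+1) * hB -
    ((X^(i+2*s+1) + 1) * (gauss (i+2*s+1) (i+s+1)).comp (X^2)) * hC

/-! ### nonnegative coefficients -/

def NN (p : Polynomial ℤ) : Prop := ∀ i, 0 ≤ p.coeff i

lemma NN_zero : NN 0 := fun i => by simp

lemma NN_one : NN 1 := fun i => by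
  rcases eq_or_ne i 0 with h | h <;> simp [h, coeff_one]

lemma NN_add {p q : Polynomial ℤ} (hp : NN p) (hq : NN q) : NN (p + q) := fun i => by
  rw [coeff_add]; exact add_nonneg (hp i) (hq i)

lemma NN_mul {p q : Polynomial ℤ} (hp : NN p) (hq : NN q) : NN (p * q) := fun i => by
  rw [coeff_mul]
  exact Finset.sum_nonneg fun x _ => mul_nonneg (hp x.1) (hq x.2)

lemma NN_X_pow (n : ℕ) : NN ((X : Polynomial ℤ) ^ n) := fun i => by
  rcases eq_or_ne i n with h | h <;> simp [coeff_X_pow, h]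

lemma NN_pow {p : Polynomial ℤ} (hp : NN p) (n : ℕ) : NN (p ^ n) := by
  induction n with
  | zero => simpa using NN_one
  | succ n ih => rw [pow_succ]; exact NN_mul ih hp

lemma NN_C {a : ℤ} (ha : 0 ≤ a) : NN (C a) := fun i => by
  rw [coeff_C]; split_ifs <;> simp [ha]

lemma NN_comp {p q : Polynomial ℤ} (hp : NN p) (hq : NN q) : NN (p.comp q) := by
  rw [Polynomial.comp_eq_sum_left, Polynomial.sum]
  intro i
  rw [Polynomial.finset_sum_coeff]
  exact Finset.sum_nonneg fun e _ => (NN_mul (NN_C (hp e)) (NN_pow hq e)) i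

lemma NN_gauss : ∀ m k, NN (gauss m k) := by
  intro m
  induction m with
  | zero => intro k; cases k
            · simpa using NN_one
            · simpa [gauss_eq_zero (Nat.succ_pos _)] using NN_zero
  | succ m ih =>
      intro k
      cases k with
      | zero => simpa using NN_one
      | succ k =>
          rw [gauss_succ_succ]
          exact NN_add (ih k) (NN_mul (NN_X_pow (k+1)) (ih (k+1)))

/-- `[m+1 choose m] = [m+1]` -/
lemma gauss_pred : ∀ m : ℕ, gauss (m + 1) m = qIntP (m + 1) := by
  intro m
  induction m with
  | zero => simp [qIntP_one]
  | succ m ih =>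
      rw [gauss_succ_succ, ih, gauss_self]
      rw [qIntP_add (m+1) 1, qIntP_one]

/-! ### the ballot difference polynomial -/

noncomputable def Dpoly (b a : ℕ) : Polynomial ℤ :=
  gauss (2*b - 1) (b + a - 1) - X ^ a * gauss (2*b - 1) (b + a)

lemma Dpoly_self (b : ℕ) : Dpoly (b + 1) (b + 1) = 1 := by
  rw [Dpoly, show 2*(b+1) - 1 = 2*b+1 by omega, show (b+1) + (b+1) - 1 = 2*b+1 by omega,
    show (b+1) + (b+1) = 2*b+2 by omega, gauss_self,
    gauss_eq_zero (show 2*b+1 < 2*b+2 by omega)]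
  simp

lemma Dpoly_of_lt {b a : ℕ} (hb : 1 ≤ b) (h : b < a) : Dpoly b a = 0 := by
  rw [Dpoly, gauss_eq_zero (show 2*b-1 < b+a-1 by omega),
    gauss_eq_zero (show 2*b-1 < b+a by omega)]
  simp

lemma Dpoly_zero_right (b : ℕ) : Dpoly (b + 1) 0 = 0 := by
  rw [Dpoly, show 2*(b+1) - 1 = 2*b+1 by omega, show (b+1) + 0 - 1 = b by omega,
    show (b+1) + 0 = b+1 by omega, gauss_symm (show b ≤ 2*b+1 by omega),
    show 2*b+1 - b = b+1 by omega]
  simp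

/-- The recurrence, case `a = b - 1`. -/
lemma Drec1 (c : ℕ) :
    Dpoly (c + 2) (c + 1) =
      X * Dpoly (c + 1) c + (1 + X ^ (2*c + 2)) * Dpoly (c + 1) (c + 1) := by
  have g3 : gauss (2*c+3) (2*c+2) = qIntP (2*c+3) := by
    have := gauss_pred (2*c+2); rwa [show 2*c+2+1 = 2*c+3 by omega] at this
  have g2 : gauss (2*c+1) (2*c) = qIntP (2*c+1) := gauss_pred (2*c)
  rw [Dpoly, Dpoly, Dpoly,
    show 2*(c+2) - 1 = 2*c+3 by omega, show (c+2) + (c+1) - 1 = 2*c+2 by omega,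
    show (c+2) + (c+1) = 2*c+3 by omega,
    show 2*(c+1) - 1 = 2*c+1 by omega, show (c+1) + c - 1 = 2*c by omega,
    show (c+1) + c = 2*c+1 by omega, show (c+1) + (c+1) - 1 = 2*c+1 by omega,
    show (c+1) + (c+1) = 2*c+2 by omega,
    g3, g2, gauss_self (2*c+3), gauss_self (2*c+1),
    gauss_eq_zero (show 2*c+1 < 2*c+2 by omega)]
  have h1 := qIntP_add 1 (2*c+2)
  have h2 := qIntP_add (2*c+1) 1
  rw [qIntP_one] at h1 h2
  rw [show (1 : ℕ) + (2*c+2) = 2*c+3 by omega] at h1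
  rw [show (2*c+1) + 1 = 2*c+2 by omega] at h2
  linear_combination h1 + X * h2

/-- same-row absorption relation -/
lemma Wrel (n k : ℕ) : (X ^ (n - k) - 1) * gauss n k = (X ^ (k + 1) - 1) * gauss n (k + 1) := by
  have h1 := A2 n k
  have h2 := B2 n (k + 1)
  rw [show n + 1 - (k + 1) = n - k by omega] at h2
  apply mul_left_cancel₀ (X_pow_sub_one_ne_zero (Nat.succ_ne_zero n) :
    (X ^ (n + 1) - 1 : Polynomial ℤ) ≠ 0)
  linear_combination (X ^ (n - k) - 1) * h1 - (X ^ (k + 1) - 1) * h2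

/-- The recurrence, generic case (`a = c+1`, `b = c+e+3`). -/
lemma Drec2 (c e : ℕ) :
    Dpoly (c + e + 3) (c + 1) =
      X ^ (e + 2) * Dpoly (c + e + 2) c
        + (1 + X ^ (2*c + 2*e + 4)) * Dpoly (c + e + 2) (c + 1)
        + X ^ (2*c + e + 3) * Dpoly (c + e + 2) (c + 2) := by
  have hC : ((X ^ (2*c+2*e+4) - 1) * (X ^ (2*c+2*e+5) - 1) : Polynomial ℤ) ≠ 0 :=
    mul_ne_zero (X_pow_sub_one_ne_zero (by omega)) (X_pow_sub_one_ne_zero (by omega))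
  apply mul_left_cancel₀ hC
  rw [Dpoly, Dpoly, Dpoly, Dpoly,
    show 2*(c+e+3) - 1 = 2*c+2*e+5 by omega,
    show (c+e+3) + (c+1) - 1 = 2*c+e+3 by omega,
    show (c+e+3) + (c+1) = 2*c+e+4 by omega,
    show 2*(c+e+2) - 1 = 2*c+2*e+3 by omega,
    show (c+e+2) + c - 1 = 2*c+e+1 by omega,
    show (c+e+2) + c = 2*c+e+2 by omega,
    show (c+e+2) + (c+1) - 1 = 2*c+e+2 by omega,
    show (c+e+2) + (c+1) = 2*c+e+3 by omega,
    show (c+e+2) + (c+2) - 1 = 2*c+e+3 by omega,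
    show (c+e+2) + (c+2) = 2*c+e+4 by omega]
  have p1 := A2 (2*c+2*e+3) (2*c+e+1)
  have p2 := A2 (2*c+2*e+3) (2*c+e+2)
  have p3 := B2 (2*c+2*e+3) (2*c+e+3)
  have p4 := B2 (2*c+2*e+3) (2*c+e+4)
  have q1 := A2 (2*c+2*e+4) (2*c+e+2)
  have q2 := B2 (2*c+2*e+4) (2*c+e+3)
  have q3 := A2 (2*c+2*e+4) (2*c+e+3)
  have q4 := B2 (2*c+2*e+4) (2*c+e+4)
  simp only [show 2*c+2*e+3+1 = 2*c+2*e+4 from by omega,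
    show 2*c+2*e+4+1 = 2*c+2*e+5 from by omega,
    show 2*c+e+1+1 = 2*c+e+2 from by omega,
    show 2*c+e+2+1 = 2*c+e+3 from by omega,
    show 2*c+e+3+1 = 2*c+e+4 from by omega,
    show 2*c+2*e+4 - (2*c+e+3) = e+1 from by omega,
    show 2*c+2*e+4 - (2*c+e+4) = e from by omega,
    show 2*c+2*e+5 - (2*c+e+3) = e+2 from by omega,
    show 2*c+2*e+5 - (2*c+e+4) = e+1 from by omega] at p1 p2 p3 p4 q1 q2 q3 q4
  have w := Wrel (2*c+2*e+5) (2*c+e+3)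
  rw [show 2*c+2*e+5 - (2*c+e+3) = e+2 from by omega,
    show 2*c+e+3+1 = 2*c+e+4 from by omega] at w
  linear_combination
    ((1 + X^(c+1)) * X^(c+e+2) * (X^(c+e+2) - 1)) * w
    + (-(X^(e+2) * (X^(2*c+2*e+5) - 1))) * p1 + (-(X^(e+2) * (X^(2*c+e+2) - 1))) * q1
    + (-((1 + X^(2*c+2*e+4) - X^(c+e+2)) * (X^(2*c+2*e+5) - 1))) * p2
      + (-((1 + X^(2*c+2*e+4) - X^(c+e+2)) * (X^(2*c+e+3) - 1))) * q2
    + (-((X^(2*c+e+3) - X^(c+1) - X^(c+1) * X^(2*c+2*e+4)) * (X^(2*c+2*e+5) - 1))) * p3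
      + (-((X^(2*c+e+3) - X^(c+1) - X^(c+1) * X^(2*c+2*e+4)) * (X^(e+1) - 1))) * q3
    + (X^(3*c+e+5) * (X^(2*c+2*e+5) - 1)) * p4
      + (X^(3*c+e+5) * (X^e - 1)) * q4

lemma NN_X : NN (X : Polynomial ℤ) := fun i => by
  rw [coeff_X]; split_ifs <;> simp

lemma Dnn : ∀ b a, a ≤ b → NN (Dpoly b a) := by
  intro b
  induction b with
  | zero =>
      intro a ha
      interval_cases a
      simp only [Dpoly]
      norm_num
      exact NN_zero
  | succ b ih =>
      intro a ha
      rcases Nat.eq_zero_or_pos a with rfl | h1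
      · rw [Dpoly_zero_right]; exact NN_zero
      rcases eq_or_lt_of_le ha with he | hlt
      · rw [he, Dpoly_self]; exact NN_one
      · have hab : a ≤ b := by omega
        obtain ⟨c, rfl⟩ : ∃ c, a = c + 1 := ⟨a - 1, by omega⟩
        rcases eq_or_lt_of_le hab with he2 | hlt2
        · -- a = b
          rw [show b + 1 = c + 2 by omega, Drec1]
          refine NN_add (NN_mul NN_X ?_) (NN_mul (NN_add NN_one (NN_X_pow _)) ?_)
          · exact (by rw [show b = c + 1 by omega] at ih; exact ih c (by omega))
          · rw [show b = c + 1 by omega] at ih; exact ih (c+1) (by omega)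
        · -- a ≤ b - 1
          obtain ⟨e, hbe⟩ : ∃ e, b + 1 = c + e + 3 := ⟨b - c - 2, by omega⟩
          rw [hbe, Drec2]
          have hib : b = c + e + 2 := by omega
          rw [hib] at ih
          refine NN_add (NN_add (NN_mul (NN_X_pow _) (ih c (by omega)))
            (NN_mul (NN_add NN_one (NN_X_pow _)) (ih (c+1) (by omega))))
            (NN_mul (NN_X_pow _) (ih (c+2) (by omega)))


/-- For `1 ≤ j ≤ r`, let `P ∈ ℤ[q]` be the polynomial determined by
`[2r−j]_q·P(q) = [j]_q·[2r−j choose r]_{q²}` (such `P` exists). Then `P(−q)`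
has only nonnegative coefficients; equivalently
`T_r^{(j)}(2r−j,−q) = q^{r²−r}·P(−q)` is a positive polynomial for `j ≤ r`. -/
theorem Trj_at_neg_q_nonneg (r j : ℕ) (hj : 1 ≤ j) (hjr : j ≤ r) (P : Polynomial ℤ)
    (hP : qIntP (2 * r - j) * P = qIntP j * qBinomP2 (2 * r - j) r) :
    ∀ i : ℕ, 0 ≤ (P.comp (-Polynomial.X)).coeff i := by
  have hb : qBinomP2 (2 * r - j) r = (gauss (2 * r - j) r).comp (X ^ 2) := by
    rw [qBinomP2, qBinomP_eq_gauss (show r ≤ 2 * r - j by omega)]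
  have hkey := key (j - 1) (r - j)
  rw [show j - 1 + 2 * (r - j) + 1 = 2 * r - j by omega,
      show j - 1 + 2 * (r - j) = 2 * r - j - 1 by omega,
      show j - 1 + (r - j) + 1 = r by omega,
      show j - 1 + (r - j) = r - 1 by omega,
      show j - 1 + 1 = j by omega] at hkey
  have hP0 : P = (gauss (2 * r - j - 1) (r - 1)).comp (X ^ 2)
      - X ^ j * (gauss (2 * r - j - 1) r).comp (X ^ 2) := by
    have hne : qIntP (2 * r - j) ≠ 0 := qIntP_ne_zero (by omega)
    apply mul_left_cancel₀ hne
    rw [hP, hb, ← hkey]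
  have e1 : ∀ g : Polynomial ℤ, (g.comp ((X : Polynomial ℤ) ^ 2)).comp (-X) = g.comp (X ^ 2) := by
    intro g
    rw [Polynomial.comp_assoc, X_pow_comp, neg_sq]
  show NN (P.comp (-X))
  rw [hP0, sub_comp, mul_comp, X_pow_comp, e1, e1]
  rcases Nat.even_or_odd j with hev | hod
  · -- even case : ballot positivity
    obtain ⟨c, hc⟩ := hev
    have hxj : ((-X : Polynomial ℤ) ^ j) = X ^ j := Even.neg_pow ⟨c, hc⟩ X
    rw [hxj]
    have hD : (gauss (2 * r - j - 1) (r - 1)).comp (X ^ 2)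
        - X ^ j * (gauss (2 * r - j - 1) r).comp (X ^ 2)
        = (Dpoly (r - c) c).comp (X ^ 2) := by
      rw [Dpoly, show 2 * (r - c) - 1 = 2 * r - j - 1 by omega,
        show (r - c) + c - 1 = r - 1 by omega, show (r - c) + c = r by omega,
        sub_comp, mul_comp, X_pow_comp, ← pow_mul, show 2 * c = j by omega]
    rw [hD]
    exact NN_comp (Dnn (r - c) c (by omega)) (NN_X_pow 2)
  · -- odd case : manifestly nonnegative
    rw [Odd.neg_pow hod (X : Polynomial ℤ)]
    have : (gauss (2 * r - j - 1) (r - 1)).comp (X ^ 2)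
        - -X ^ j * (gauss (2 * r - j - 1) r).comp (X ^ 2)
        = (gauss (2 * r - j - 1) (r - 1)).comp (X ^ 2)
          + X ^ j * (gauss (2 * r - j - 1) r).comp (X ^ 2) := by ring
    rw [this]
    exact NN_add (NN_comp (NN_gauss _ _) (NN_X_pow 2))
      (NN_mul (NN_X_pow j) (NN_comp (NN_gauss _ _) (NN_X_pow 2)))
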